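/- arXiv:1302.3826 — 2 statements merged into one kernel-verified Lean document; each statement's English description precedes it below -/
import Mathlib

section
/- For any c ≥ 0, the pointwise minimum of the function h(r) = 1 − max{r11+r10, r11+r01} and c plus the Bayes-operator average of a concave function is concave; consequently, the value function V_r defined by value iteration V_r^{(n+1)}(r) = min{h(r), c + E[V_r^{(n)}(r') | r]} starting from V_r^{(0)} = h remains concave at every iteration, where the expectation is over the Bayesian posterior update with likelihoods f0, f1. -/
open MeasureTheory

/-- The probability simplex of refinement posteriors `(r11, r10, r01, r00)`. -/
def S4 : Set (ℝ × ℝ × ℝ × ℝ) :=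
  {r | 0 ≤ r.1 ∧ 0 ≤ r.2.1 ∧ 0 ≤ r.2.2.1 ∧ 0 ≤ r.2.2.2 ∧
    r.1 + r.2.1 + r.2.2.1 + r.2.2.2 = 1}

/-- Terminal error-probability cost `h(r) = 1 - max{r11+r10, r11+r01}`. -/
noncomputable def hCost (r : ℝ × ℝ × ℝ × ℝ) : ℝ :=
  1 - max (r.1 + r.2.1) (r.1 + r.2.2.1)

/-- Predictive density `D(x) = f1(x)(r11+r10) + f0(x)(r01+r00)`. -/
noncomputable def Dfun (f0 f1 : ℝ → ℝ) (x : ℝ) (r : ℝ × ℝ × ℝ × ℝ) : ℝ :=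
  f1 x * (r.1 + r.2.1) + f0 x * (r.2.2.1 + r.2.2.2)

/-- Bayesian posterior update of the refinement posteriors. -/
noncomputable def upd (f0 f1 : ℝ → ℝ) (x : ℝ) (r : ℝ × ℝ × ℝ × ℝ) :
    ℝ × ℝ × ℝ × ℝ :=
  (f1 x * r.1 / Dfun f0 f1 x r, f1 x * r.2.1 / Dfun f0 f1 x r,
    f0 x * r.2.2.1 / Dfun f0 f1 x r, f0 x * r.2.2.2 / Dfun f0 f1 x r)

/-- Bayes operator: `T V (r) = E[V(r') | r] = ∫ V(upd x r) D(x) dx`. -/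
noncomputable def Tb (f0 f1 : ℝ → ℝ) (V : ℝ × ℝ × ℝ × ℝ → ℝ)
    (r : ℝ × ℝ × ℝ × ℝ) : ℝ :=
  ∫ x : ℝ, V (upd f0 f1 x r) * Dfun f0 f1 x r

/-- Value iteration `V^{(0)} = h`, `V^{(n+1)} = min{h, c + T V^{(n)}}`. -/
noncomputable def Vit (f0 f1 : ℝ → ℝ) (c : ℝ) : ℕ → (ℝ × ℝ × ℝ × ℝ → ℝ)
  | 0 => hCost
  | n + 1 => fun r => min (hCost r) (c + Tb f0 f1 (Vit f0 f1 c n) r)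

open Set

set_option linter.unusedVariables false

lemma S4_convex : Convex ℝ S4 := by
  intro r hr s hs a b ha hb hab
  obtain ⟨h1, h2, h3, h4, h5⟩ := hr
  obtain ⟨g1, g2, g3, g4, g5⟩ := hs
  simp only [S4, Set.mem_setOf_eq, Prod.fst_add, Prod.snd_add, Prod.smul_fst, Prod.smul_snd,
    smul_eq_mul] at *
  refine ⟨by positivity, by positivity, by positivity, by positivity, ?_⟩
  linear_combination a * h5 + b * g5 + hab

lemma Dfun_nonneg {f0 f1 : ℝ → ℝ} (hf0 : ∀ x, 0 ≤ f0 x) (hf1 : ∀ x, 0 ≤ f1 x)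
    (x : ℝ) {r : ℝ × ℝ × ℝ × ℝ} (hr : r ∈ S4) : 0 ≤ Dfun f0 f1 x r := by
  obtain ⟨h1, h2, h3, h4, -⟩ := hr
  have := hf0 x; have := hf1 x
  unfold Dfun; positivity

lemma Dzero {f0 f1 : ℝ → ℝ} (hf0 : ∀ x, 0 ≤ f0 x) (hf1 : ∀ x, 0 ≤ f1 x)
    (x : ℝ) {r : ℝ × ℝ × ℝ × ℝ} (hr : r ∈ S4) (h : Dfun f0 f1 x r = 0) :
    f1 x * r.1 = 0 ∧ f1 x * r.2.1 = 0 ∧ f0 x * r.2.2.1 = 0 ∧ f0 x * r.2.2.2 = 0 := by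
  obtain ⟨h1, h2, h3, h4, -⟩ := hr
  have e0 := hf0 x; have e1 := hf1 x
  unfold Dfun at h
  have t1 : 0 ≤ f1 x * r.1 := mul_nonneg e1 h1
  have t2 : 0 ≤ f1 x * r.2.1 := mul_nonneg e1 h2
  have t3 : 0 ≤ f0 x * r.2.2.1 := mul_nonneg e0 h3
  have t4 : 0 ≤ f0 x * r.2.2.2 := mul_nonneg e0 h4
  refine ⟨by nlinarith, by nlinarith, by nlinarith, by nlinarith⟩

lemma upd_mem {f0 f1 : ℝ → ℝ} (hf0 : ∀ x, 0 ≤ f0 x) (hf1 : ∀ x, 0 ≤ f1 x)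
    (x : ℝ) {r : ℝ × ℝ × ℝ × ℝ} (hr : r ∈ S4) (hD : 0 < Dfun f0 f1 x r) :
    upd f0 f1 x r ∈ S4 := by
  obtain ⟨h1, h2, h3, h4, -⟩ := hr
  have e0 := hf0 x; have e1 := hf1 x
  refine ⟨div_nonneg (mul_nonneg e1 h1) hD.le, div_nonneg (mul_nonneg e1 h2) hD.le,
    div_nonneg (mul_nonneg e0 h3) hD.le, div_nonneg (mul_nonneg e0 h4) hD.le, ?_⟩
  show f1 x * r.1 / _ + f1 x * r.2.1 / _ + f0 x * r.2.2.1 / _ + f0 x * r.2.2.2 / _ = 1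
  rw [← add_div, ← add_div, ← add_div, div_eq_one_iff_eq hD.ne']
  unfold Dfun; ring

lemma concave_abs_le {φ : ℝ → ℝ} (hφ : ConcaveOn ℝ (Set.Icc 0 1) φ)
    {t : ℝ} (ht : t ∈ Set.Icc (0:ℝ) 1) :
    |φ t| ≤ |φ 0| + |φ 1| + 2 * |φ (1/2)| := by
  obtain ⟨ht0, ht1⟩ := ht
  have h0 : (0:ℝ) ∈ Set.Icc (0:ℝ) 1 := by constructor <;> norm_num
  have h1 : (1:ℝ) ∈ Set.Icc (0:ℝ) 1 := by constructor <;> norm_num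
  have low : ∀ u, 0 ≤ u → u ≤ 1 → -(|φ 0| + |φ 1|) ≤ φ u := by
    intro u hu0 hu1
    have := hφ.2 h0 h1 (show (0:ℝ) ≤ 1 - u by linarith) hu0 (show 1 - u + u = 1 by ring)
    simp only [smul_eq_mul, mul_zero, mul_one, zero_add] at this
    have a0 := neg_abs_le (φ 0); have a1 := neg_abs_le (φ 1)
    have b0 := abs_nonneg (φ 0); have b1 := abs_nonneg (φ 1)
    nlinarith
  have ht' : (1 - t) ∈ Set.Icc (0:ℝ) 1 := ⟨by linarith, by linarith⟩
  have mid := hφ.2 (Set.mem_Icc.2 ⟨ht0, ht1⟩) ht'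
    (show (0:ℝ) ≤ 1/2 by norm_num) (show (0:ℝ) ≤ 1/2 by norm_num)
    (show (1:ℝ)/2 + 1/2 = 1 by norm_num)
  simp only [smul_eq_mul] at mid
  have e : (1:ℝ)/2 * t + 1/2 * (1 - t) = 1/2 := by ring
  rw [e] at mid
  have lt' := low (1 - t) (by linarith) (by linarith)
  have lt0 := low t ht0 ht1
  have a2 := le_abs_self (φ (1/2)); have a3 := abs_nonneg (φ (1/2))
  rw [abs_le]
  constructor <;> nlinarith

lemma measurable_indicator_cOn {s : Set ℝ} (hs : IsOpen s) {φ : ℝ → ℝ}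
    (hφ : ContinuousOn φ s) : Measurable (s.indicator φ) := by
  apply measurable_of_isOpen
  intro U hU
  by_cases h : (0:ℝ) ∈ U
  · have he : s.indicator φ ⁻¹' U = (s ∩ φ ⁻¹' U) ∪ sᶜ := by
      ext y
      simp only [Set.mem_preimage, Set.indicator_apply, Set.mem_union, Set.mem_inter_iff,
        Set.mem_compl_iff]
      by_cases hy : y ∈ s <;> simp [hy, h]
    rw [he]
    exact (hφ.isOpen_inter_preimage hs hU).measurableSet.union hs.measurableSet.compl
  · have he : s.indicator φ ⁻¹' U = s ∩ φ ⁻¹' U := by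
      ext y
      simp only [Set.mem_preimage, Set.indicator_apply, Set.mem_inter_iff]
      by_cases hy : y ∈ s <;> simp [hy, h]
    rw [he]
    exact (hφ.isOpen_inter_preimage hs hU).measurableSet

lemma hCost_concave : ConcaveOn ℝ S4 hCost := by
  have e : hCost = fun r : ℝ × ℝ × ℝ × ℝ =>
      min (1 - (r.1 + r.2.1)) (1 - (r.1 + r.2.2.1)) := by
    funext r
    rw [hCost]
    rcases max_cases (r.1 + r.2.1) (r.1 + r.2.2.1) with ⟨h, h'⟩ | ⟨h, h'⟩ <;>
      rw [h] <;> [rw [min_eq_left (by linarith)]; rw [min_eq_right (by linarith)]]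
  rw [e]
  have c1 : ConcaveOn ℝ S4 (fun r : ℝ × ℝ × ℝ × ℝ => 1 - (r.1 + r.2.1)) := by
    refine ⟨S4_convex, fun r _ s _ a b ha hb hab => ?_⟩
    simp only [smul_eq_mul, Prod.fst_add, Prod.snd_add, Prod.smul_fst, Prod.smul_snd]
    apply le_of_eq
    linear_combination hab
  have c2 : ConcaveOn ℝ S4 (fun r : ℝ × ℝ × ℝ × ℝ => 1 - (r.1 + r.2.2.1)) := by
    refine ⟨S4_convex, fun r _ s _ a b ha hb hab => ?_⟩
    simp only [smul_eq_mul, Prod.fst_add, Prod.snd_add, Prod.smul_fst, Prod.smul_snd]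
    apply le_of_eq
    linear_combination hab
  exact c1.inf c2

lemma key0 {f0 f1 : ℝ → ℝ} (hf0 : ∀ x, 0 ≤ f0 x) (hf1 : ∀ x, 0 ≤ f1 x)
    (W : ℝ × ℝ × ℝ × ℝ → ℝ) (x : ℝ)
    {r s : ℝ × ℝ × ℝ × ℝ} (hr : r ∈ S4) (hs : s ∈ S4) {a b : ℝ}
    (ha : 0 ≤ a) (hb : 0 ≤ b) (hab : a + b = 1)
    (hDr : Dfun f0 f1 x r = 0) :
    a * (W (upd f0 f1 x r) * Dfun f0 f1 x r) + b * (W (upd f0 f1 x s) * Dfun f0 f1 x s)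
      ≤ W (upd f0 f1 x (a • r + b • s)) * Dfun f0 f1 x (a • r + b • s) := by
  obtain ⟨z1, z2, z3, z4⟩ := Dzero hf0 hf1 x hr hDr
  have hDm : Dfun f0 f1 x (a • r + b • s) = a * Dfun f0 f1 x r + b * Dfun f0 f1 x s := by
    simp only [Dfun, Prod.fst_add, Prod.snd_add, Prod.smul_fst, Prod.smul_snd, smul_eq_mul]
    ring
  rw [hDr] at hDm
  rw [hDr, mul_zero, mul_zero, zero_add]
  rcases eq_or_lt_of_le (mul_nonneg hb (Dfun_nonneg hf0 hf1 x hs)) with h0 | h0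
  · have e1 : Dfun f0 f1 x (a • r + b • s) = 0 := by rw [hDm, ← h0]; ring
    have e2 : b * (W (upd f0 f1 x s) * Dfun f0 f1 x s)
        = W (upd f0 f1 x s) * (b * Dfun f0 f1 x s) := by ring
    rw [e2, ← h0, mul_zero, e1, mul_zero]
  · have hbpos : 0 < b := by
      obtain h | h := hb.eq_or_lt
      · rw [← h, zero_mul] at h0; exact absurd h0 (lt_irrefl 0)
      · exact h
    have hDsnn := Dfun_nonneg hf0 hf1 x hs
    have hDs : 0 < Dfun f0 f1 x s := by nlinarith
    have e1' : Dfun f0 f1 x (a • r + b • s) = b * Dfun f0 f1 x s := by rw [hDm]; ring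
    have hupd : upd f0 f1 x (a • r + b • s) = upd f0 f1 x s := by
      simp only [upd, Prod.fst_add, Prod.snd_add, Prod.smul_fst, Prod.smul_snd, smul_eq_mul,
        e1', Prod.mk.injEq]
      refine ⟨?_, ?_, ?_, ?_⟩
      · rw [show f1 x * (a * r.1 + b * s.1) = b * (f1 x * s.1) by linear_combination a * z1,
          mul_div_mul_left _ _ hbpos.ne']
      · rw [show f1 x * (a * r.2.1 + b * s.2.1) = b * (f1 x * s.2.1) by
          linear_combination a * z2, mul_div_mul_left _ _ hbpos.ne']
      · rw [show f0 x * (a * r.2.2.1 + b * s.2.2.1) = b * (f0 x * s.2.2.1) by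
          linear_combination a * z3, mul_div_mul_left _ _ hbpos.ne']
      · rw [show f0 x * (a * r.2.2.2 + b * s.2.2.2) = b * (f0 x * s.2.2.2) by
          linear_combination a * z4, mul_div_mul_left _ _ hbpos.ne']
    rw [hupd, e1']
    exact le_of_eq (by ring)

lemma key {f0 f1 : ℝ → ℝ} (hf0 : ∀ x, 0 ≤ f0 x) (hf1 : ∀ x, 0 ≤ f1 x)
    {W : ℝ × ℝ × ℝ × ℝ → ℝ} (hW : ConcaveOn ℝ S4 W) (x : ℝ)
    {r s : ℝ × ℝ × ℝ × ℝ} (hr : r ∈ S4) (hs : s ∈ S4) {a b : ℝ}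
    (ha : 0 ≤ a) (hb : 0 ≤ b) (hab : a + b = 1) :
    a * (W (upd f0 f1 x r) * Dfun f0 f1 x r) + b * (W (upd f0 f1 x s) * Dfun f0 f1 x s)
      ≤ W (upd f0 f1 x (a • r + b • s)) * Dfun f0 f1 x (a • r + b • s) := by
  rcases eq_or_lt_of_le (Dfun_nonneg hf0 hf1 x hr) with h | h
  · exact key0 hf0 hf1 W x hr hs ha hb hab h.symm
  rcases eq_or_lt_of_le (Dfun_nonneg hf0 hf1 x hs) with h' | h'
  · have := key0 hf0 hf1 W x hs hr hb ha (by linarith) h'.symm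
    rw [show b • s + a • r = a • r + b • s from add_comm _ _] at this
    linarith
  -- main case: both densities positive
  have hDm : Dfun f0 f1 x (a • r + b • s)
      = a * Dfun f0 f1 x r + b * Dfun f0 f1 x s := by
    simp only [Dfun, Prod.fst_add, Prod.snd_add, Prod.smul_fst, Prod.smul_snd, smul_eq_mul]
    ring
  have hDmpos : 0 < Dfun f0 f1 x (a • r + b • s) := by
    rw [hDm]
    rcases le_total (Dfun f0 f1 x r) (Dfun f0 f1 x s) with hle | hle <;>
      nlinarith [mul_le_mul_of_nonneg_left hle hb, mul_le_mul_of_nonneg_left hle ha]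
  have hur := upd_mem hf0 hf1 x hr h
  have hus := upd_mem hf0 hf1 x hs h'
  set Dm := Dfun f0 f1 x (a • r + b • s) with hDmdef
  set Dr := Dfun f0 f1 x r with hDrdef
  set Ds := Dfun f0 f1 x s with hDsdef
  have hcomb : upd f0 f1 x (a • r + b • s)
      = (a * Dr / Dm) • upd f0 f1 x r + (b * Ds / Dm) • upd f0 f1 x s := by
    simp only [upd, Prod.fst_add, Prod.snd_add, Prod.smul_fst, Prod.smul_snd, smul_eq_mul,
      Prod.smul_mk, Prod.mk_add_mk, Prod.mk.injEq, ← hDmdef, ← hDrdef, ← hDsdef]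
    refine ⟨?_, ?_, ?_, ?_⟩ <;>
      · field_simp
  have hα : 0 ≤ a * Dr / Dm := div_nonneg (mul_nonneg ha h.le) hDmpos.le
  have hβ : 0 ≤ b * Ds / Dm := div_nonneg (mul_nonneg hb h'.le) hDmpos.le
  have hsum : a * Dr / Dm + b * Ds / Dm = 1 := by
    rw [← add_div, ← hDm, div_self hDmpos.ne']
  have hWc := hW.2 hur hus hα hβ hsum
  rw [← hcomb] at hWc
  simp only [smul_eq_mul] at hWc
  calc a * (W (upd f0 f1 x r) * Dr) + b * (W (upd f0 f1 x s) * Ds)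
      = (a * Dr / Dm * W (upd f0 f1 x r) + b * Ds / Dm * W (upd f0 f1 x s)) * Dm := by
        field_simp
    _ ≤ W (upd f0 f1 x (a • r + b • s)) * Dm :=
        mul_le_mul_of_nonneg_right hWc hDmpos.le

lemma g_integrable {f0 f1 : ℝ → ℝ} (hf0m : Measurable f0) (hf1m : Measurable f1)
    (hf0 : ∀ x, 0 ≤ f0 x) (hf1 : ∀ x, 0 ≤ f1 x)
    (hf0i : Integrable f0) (hf1i : Integrable f1)
    {W : ℝ × ℝ × ℝ × ℝ → ℝ} (hW : ConcaveOn ℝ S4 W)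
    {r : ℝ × ℝ × ℝ × ℝ} (hr : r ∈ S4) :
    Integrable (fun x => W (upd f0 f1 x r) * Dfun f0 f1 x r) := by
  obtain ⟨r1, r2, r3, r4⟩ := r
  obtain ⟨h1, h2, h3, h4, h5⟩ := hr
  simp only at h1 h2 h3 h4 h5
  have hrS4 : (r1, r2, r3, r4) ∈ S4 := ⟨h1, h2, h3, h4, h5⟩
  rcases eq_or_lt_of_le (add_nonneg h1 h2) with hA0 | hApos
  · -- r1 + r2 = 0, so r1 = r2 = 0 and r3 + r4 = 1
    have hr1 : r1 = 0 := by linarith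
    have hr2 : r2 = 0 := by linarith
    have hB1 : r3 + r4 = 1 := by linarith
    have hrep : (fun x => W (upd f0 f1 x (r1, r2, r3, r4)) * Dfun f0 f1 x (r1, r2, r3, r4))
        = fun x => W (r1, r2, r3, r4) * f0 x := by
      funext x
      have hD : Dfun f0 f1 x (r1, r2, r3, r4) = f0 x := by
        simp only [Dfun]; rw [hr1, hr2, hB1]; ring
      by_cases h : f0 x = 0
      · rw [hD, h, mul_zero, mul_zero]
      · have hu : upd f0 f1 x (r1, r2, r3, r4) = (r1, r2, r3, r4) := by
          simp only [upd, hD, Prod.mk.injEq]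
          refine ⟨?_, ?_, ?_, ?_⟩
          · rw [hr1]; simp
          · rw [hr2]; simp
          · field_simp
          · field_simp
        rw [hu, hD]
    rw [hrep]
    exact hf0i.const_mul _
  rcases eq_or_lt_of_le (add_nonneg h3 h4) with hB0 | hBpos
  · -- r3 + r4 = 0
    have hr3 : r3 = 0 := by linarith
    have hr4 : r4 = 0 := by linarith
    have hA1 : r1 + r2 = 1 := by linarith
    have hrep : (fun x => W (upd f0 f1 x (r1, r2, r3, r4)) * Dfun f0 f1 x (r1, r2, r3, r4))
        = fun x => W (r1, r2, r3, r4) * f1 x := by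
      funext x
      have hD : Dfun f0 f1 x (r1, r2, r3, r4) = f1 x := by
        simp only [Dfun]; rw [hr3, hr4, hA1]; ring
      by_cases h : f1 x = 0
      · rw [hD, h, mul_zero, mul_zero]
      · have hu : upd f0 f1 x (r1, r2, r3, r4) = (r1, r2, r3, r4) := by
          simp only [upd, hD, Prod.mk.injEq]
          refine ⟨?_, ?_, ?_, ?_⟩
          · field_simp
          · field_simp
          · rw [hr3]; simp
          · rw [hr4]; simp
        rw [hu, hD]
    rw [hrep]
    exact hf1i.const_mul _
  -- main case : r1 + r2 > 0 and r3 + r4 > 0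
  set σ : ℝ → ℝ × ℝ × ℝ × ℝ := fun t =>
    (t * (r1 / (r1 + r2)), t * (r2 / (r1 + r2)),
      (1 - t) * (r3 / (r3 + r4)), (1 - t) * (r4 / (r3 + r4))) with hσdef
  set φ : ℝ → ℝ := fun t => W (σ t) with hφdef
  have hσmem : ∀ t : ℝ, 0 ≤ t → t ≤ 1 → σ t ∈ S4 := by
    intro t ht0 ht1
    refine ⟨mul_nonneg ht0 (div_nonneg h1 hApos.le), mul_nonneg ht0 (div_nonneg h2 hApos.le),
      mul_nonneg (by linarith) (div_nonneg h3 hBpos.le),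
      mul_nonneg (by linarith) (div_nonneg h4 hBpos.le), ?_⟩
    show t * (r1 / (r1 + r2)) + t * (r2 / (r1 + r2)) + (1 - t) * (r3 / (r3 + r4))
      + (1 - t) * (r4 / (r3 + r4)) = 1
    have e : t * (r1 / (r1 + r2)) + t * (r2 / (r1 + r2)) + (1 - t) * (r3 / (r3 + r4))
        + (1 - t) * (r4 / (r3 + r4))
        = t * ((r1 + r2) / (r1 + r2)) + (1 - t) * ((r3 + r4) / (r3 + r4)) := by ring
    rw [e, div_self hApos.ne', div_self hBpos.ne']; ring
  have hφconc : ConcaveOn ℝ (Set.Icc 0 1) φ := by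
    refine ⟨convex_Icc 0 1, ?_⟩
    intro t ht u hu a b ha hb hab
    have hσaff : σ (a * t + b * u) = a • σ t + b • σ u := by
      simp only [hσdef, Prod.smul_mk, Prod.mk_add_mk, smul_eq_mul, Prod.mk.injEq]
      refine ⟨by ring, by ring, ?_, ?_⟩
      · linear_combination (-(r3 / (r3 + r4))) * hab
      · linear_combination (-(r4 / (r3 + r4))) * hab
    have := hW.2 (hσmem t ht.1 ht.2) (hσmem u hu.1 hu.2) ha hb hab
    simp only [smul_eq_mul] at this ⊢
    rw [hφdef]
    simp only
    rw [hσaff]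
    exact this
  have hφcont : ContinuousOn φ (Set.Ioo 0 1) := by
    have := hφconc.continuousOn_interior
    rwa [interior_Icc] at this
  have hΦm : Measurable ((Set.Ioo (0:ℝ) 1).indicator φ) :=
    measurable_indicator_cOn isOpen_Ioo hφcont
  have hMnn : (0:ℝ) ≤ |φ 0| + |φ 1| + 2 * |φ (1/2)| := by positivity
  have hΦb : ∀ t : ℝ, |(Set.Ioo (0:ℝ) 1).indicator φ t| ≤ |φ 0| + |φ 1| + 2 * |φ (1/2)| := by
    intro t
    by_cases h : t ∈ Set.Ioo (0:ℝ) 1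
    · rw [Set.indicator_of_mem h]; exact concave_abs_le hφconc ⟨h.1.le, h.2.le⟩
    · rw [Set.indicator_of_notMem h, abs_zero]; exact hMnn
  have hφ0b : |φ 0| ≤ |φ 0| + |φ 1| + 2 * |φ (1/2)| := by
    nlinarith [abs_nonneg (φ 1), abs_nonneg (φ (1/2))]
  have hφ1b : |φ 1| ≤ |φ 0| + |φ 1| + 2 * |φ (1/2)| := by
    nlinarith [abs_nonneg (φ 0), abs_nonneg (φ (1/2))]
  have hDmx : Measurable (fun x => Dfun f0 f1 x (r1, r2, r3, r4)) := by
    simp only [Dfun]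
    exact (hf1m.mul_const _).add (hf0m.mul_const _)
  have hpm : Measurable (fun x => f1 x * (r1 + r2) / Dfun f0 f1 x (r1, r2, r3, r4)) :=
    (hf1m.mul_const _).div hDmx
  have hrep : (fun x => W (upd f0 f1 x (r1, r2, r3, r4)) * Dfun f0 f1 x (r1, r2, r3, r4))
      = fun x =>
        if Dfun f0 f1 x (r1, r2, r3, r4) = 0 then 0
        else if f1 x = 0 then φ 0 * Dfun f0 f1 x (r1, r2, r3, r4)
        else if f0 x = 0 then φ 1 * Dfun f0 f1 x (r1, r2, r3, r4)
        else (Set.Ioo (0:ℝ) 1).indicator φ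
          (f1 x * (r1 + r2) / Dfun f0 f1 x (r1, r2, r3, r4))
          * Dfun f0 f1 x (r1, r2, r3, r4) := by
    funext x
    have hf0x := hf0 x
    have hf1x := hf1 x
    by_cases hD : Dfun f0 f1 x (r1, r2, r3, r4) = 0
    · rw [if_pos hD, hD, mul_zero]
    rw [if_neg hD]
    have hDpos : 0 < Dfun f0 f1 x (r1, r2, r3, r4) :=
      lt_of_le_of_ne (Dfun_nonneg hf0 hf1 x hrS4) (Ne.symm hD)
    have hDe : Dfun f0 f1 x (r1, r2, r3, r4) = f1 x * (r1 + r2) + f0 x * (r3 + r4) := rfl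
    by_cases hx1 : f1 x = 0
    · rw [if_pos hx1]
      have hf0ne : f0 x ≠ 0 := by
        intro h; apply hD; rw [hDe, hx1, h]; ring
      have hu : upd f0 f1 x (r1, r2, r3, r4) = σ 0 := by
        have hDe2 : Dfun f0 f1 x (r1, r2, r3, r4) = f0 x * (r3 + r4) := by
          rw [hDe, hx1]; ring
        simp only [upd, hσdef, Prod.mk.injEq, hDe2, hx1]
        refine ⟨by ring_nf, by ring_nf, ?_, ?_⟩
        · field_simp; ring
        · field_simp; ring
      rw [hu, hφdef]
    rw [if_neg hx1]
    by_cases hx0 : f0 x = 0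
    · rw [if_pos hx0]
      have hu : upd f0 f1 x (r1, r2, r3, r4) = σ 1 := by
        have hDe2 : Dfun f0 f1 x (r1, r2, r3, r4) = f1 x * (r1 + r2) := by
          rw [hDe, hx0]; ring
        simp only [upd, hσdef, Prod.mk.injEq, hDe2, hx0]
        refine ⟨?_, ?_, by ring_nf, by ring_nf⟩
        · field_simp
        · field_simp
      rw [hu, hφdef]
    rw [if_neg hx0]
    have hf1pos : 0 < f1 x := lt_of_le_of_ne hf1x (Ne.symm hx1)
    have hf0pos : 0 < f0 x := lt_of_le_of_ne hf0x (Ne.symm hx0)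
    have hp1 : 0 < f1 x * (r1 + r2) / Dfun f0 f1 x (r1, r2, r3, r4) :=
      div_pos (mul_pos hf1pos hApos) hDpos
    have hp2 : f1 x * (r1 + r2) / Dfun f0 f1 x (r1, r2, r3, r4) < 1 := by
      rw [div_lt_one hDpos, hDe]
      nlinarith [mul_pos hf0pos hBpos]
    rw [Set.indicator_of_mem (Set.mem_Ioo.2 ⟨hp1, hp2⟩)]
    have hu : upd f0 f1 x (r1, r2, r3, r4)
        = σ (f1 x * (r1 + r2) / Dfun f0 f1 x (r1, r2, r3, r4)) := by
      simp only [upd, hσdef, Prod.mk.injEq, hDe]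
      refine ⟨?_, ?_, ?_, ?_⟩
      · rw [eq_comm]
        field_simp
      · rw [eq_comm]
        field_simp
      · rw [eq_comm]
        field_simp
        ring
      · rw [eq_comm]
        field_simp
        ring
    rw [hu, hφdef]
  rw [hrep]
  apply Integrable.mono' ((hf1i.add hf0i).const_mul (|φ 0| + |φ 1| + 2 * |φ (1/2)|))
  · apply Measurable.aestronglyMeasurable
    apply Measurable.ite (hDmx (measurableSet_singleton 0)) measurable_const
    apply Measurable.ite (hf1m (measurableSet_singleton 0)) (measurable_const.mul hDmx)
    apply Measurable.ite (hf0m (measurableSet_singleton 0)) (measurable_const.mul hDmx)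
    exact (hΦm.comp hpm).mul hDmx
  · refine Filter.Eventually.of_forall fun x => ?_
    rw [Real.norm_eq_abs]
    have hDnn := Dfun_nonneg hf0 hf1 x hrS4
    have hDle : Dfun f0 f1 x (r1, r2, r3, r4) ≤ f1 x + f0 x := by
      have e1 : f1 x * (r1 + r2) ≤ f1 x * 1 :=
        mul_le_mul_of_nonneg_left (by linarith) (hf1 x)
      have e2 : f0 x * (r3 + r4) ≤ f0 x * 1 :=
        mul_le_mul_of_nonneg_left (by linarith) (hf0 x)
      show f1 x * (r1 + r2) + f0 x * (r3 + r4) ≤ f1 x + f0 x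
      linarith
    have hfnn : 0 ≤ f1 x + f0 x := add_nonneg (hf1 x) (hf0 x)
    split_ifs with hD hx1 hx0
    · rw [abs_zero]; positivity
    · rw [abs_mul, abs_of_nonneg hDnn]
      exact mul_le_mul hφ0b hDle hDnn hMnn
    · rw [abs_mul, abs_of_nonneg hDnn]
      exact mul_le_mul hφ1b hDle hDnn hMnn
    · rw [abs_mul, abs_of_nonneg hDnn]
      exact mul_le_mul (hΦb _) hDle hDnn hMnn

lemma Tb_concave {f0 f1 : ℝ → ℝ} (hf0m : Measurable f0) (hf1m : Measurable f1)
    (hf0 : ∀ x, 0 ≤ f0 x) (hf1 : ∀ x, 0 ≤ f1 x)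
    (hf0i : Integrable f0) (hf1i : Integrable f1)
    {W : ℝ × ℝ × ℝ × ℝ → ℝ} (hW : ConcaveOn ℝ S4 W) :
    ConcaveOn ℝ S4 (Tb f0 f1 W) := by
  refine ⟨S4_convex, fun r hr s hs a b ha hb hab => ?_⟩
  have hm : a • r + b • s ∈ S4 := S4_convex hr hs ha hb hab
  have hir := g_integrable hf0m hf1m hf0 hf1 hf0i hf1i hW hr
  have his := g_integrable hf0m hf1m hf0 hf1 hf0i hf1i hW hs
  have him := g_integrable hf0m hf1m hf0 hf1 hf0i hf1i hW hm
  simp only [smul_eq_mul, Tb]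
  rw [← integral_const_mul, ← integral_const_mul,
    ← integral_add (hir.const_mul a) (his.const_mul b)]
  exact integral_mono ((hir.const_mul a).add (his.const_mul b)) him
    (fun x => key hf0 hf1 hW x hr hs ha hb hab)


/-- For `c ≥ 0`, the pointwise minimum of `h` and `c` plus the
Bayes-operator average of a concave function is concave; consequently every
iterate of the value iteration starting from `h` is concave on the simplex. -/
theorem value_iteration_concave (f0 f1 : ℝ → ℝ)
    (hf0m : Measurable f0) (hf1m : Measurable f1)
    (hf0 : ∀ x, 0 ≤ f0 x) (hf1 : ∀ x, 0 ≤ f1 x)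
    (hf0i : Integrable f0) (hf1i : Integrable f1)
    (hf0int : ∫ x, f0 x = 1) (hf1int : ∫ x, f1 x = 1)
    (c : ℝ) (hc : 0 ≤ c) :
    (∀ W : ℝ × ℝ × ℝ × ℝ → ℝ, ConcaveOn ℝ S4 W →
      ConcaveOn ℝ S4 (fun r => min (hCost r) (c + Tb f0 f1 W r))) ∧
    ∀ n : ℕ, ConcaveOn ℝ S4 (Vit f0 f1 c n) := by
  have hstep : ∀ W : ℝ × ℝ × ℝ × ℝ → ℝ, ConcaveOn ℝ S4 W →
      ConcaveOn ℝ S4 (fun r => min (hCost r) (c + Tb f0 f1 W r)) := by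
    intro W hW
    have hTb := Tb_concave hf0m hf1m hf0 hf1 hf0i hf1i hW
    have hcTb : ConcaveOn ℝ S4 (fun r => c + Tb f0 f1 W r) :=
      (concaveOn_const c S4_convex).add hTb
    exact hCost_concave.inf hcTb
  refine ⟨hstep, ?_⟩
  intro n
  induction n with
  | zero => exact hCost_concave
  | succ n ih => exact hstep _ ih
end

section
/- Let V : ℝⁿ → ℝ be concave, let f0,...,fm be nonnegative densities, and for a probability vector p = (p0,...,pm) define the Bayes operator (TV)(p) = ∫ V(p'(z)) f_{Z,p}(z) dz, where f_{Z,p}(z) = Σ_i p_i f_i(z) and p'_i(z) = p_i f_i(z)/f_{Z,p}(z). Then TV is concave on the probability simplex. -/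
open MeasureTheory

private lemma bayes_key {n : ℕ} (V : (Fin n → ℝ) → ℝ) (hV : ConcaveOn ℝ Set.univ V)
    (c p q : Fin n → ℝ) (hc : ∀ i, 0 ≤ c i) (hp : ∀ i, 0 ≤ p i) (hq : ∀ i, 0 ≤ q i)
    (a b : ℝ) (ha : 0 ≤ a) (hb : 0 ≤ b) (hab : a + b = 1) :
    a * (V (fun i => p i * c i / ∑ j, p j * c j) * ∑ j, p j * c j)
      + b * (V (fun i => q i * c i / ∑ j, q j * c j) * ∑ j, q j * c j)
      ≤ V (fun i => (a * p i + b * q i) * c i / ∑ j, (a * p j + b * q j) * c j)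
          * ∑ j, (a * p j + b * q j) * c j := by
  set sp := ∑ j, p j * c j with hspdef
  set sq := ∑ j, q j * c j with hsqdef
  set sr := ∑ j, (a * p j + b * q j) * c j with hsrdef
  have hsp0 : 0 ≤ sp := Finset.sum_nonneg fun j _ => mul_nonneg (hp j) (hc j)
  have hsq0 : 0 ≤ sq := Finset.sum_nonneg fun j _ => mul_nonneg (hq j) (hc j)
  have hsr : sr = a * sp + b * sq := by
    simp only [hsrdef, hspdef, hsqdef, add_mul, Finset.sum_add_distrib,
      Finset.mul_sum, mul_assoc]
  rcases eq_or_lt_of_le (by nlinarith : (0:ℝ) ≤ sr) with h0 | hsrpos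
  · have hasp : a * sp = 0 := by nlinarith
    have hbsq : b * sq = 0 := by nlinarith
    have e1 : a * (V (fun i => p i * c i / sp) * sp)
        = V (fun i => p i * c i / sp) * (a * sp) := by ring
    have e2 : b * (V (fun i => q i * c i / sq) * sq)
        = V (fun i => q i * c i / sq) * (b * sq) := by ring
    rw [e1, e2, hasp, hbsq, ← h0]
    simp
  · have hsrne : sr ≠ 0 := ne_of_gt hsrpos
    set lam := a * sp / sr with hlam
    set mu := b * sq / sr with hmu
    have hlam0 : 0 ≤ lam := div_nonneg (mul_nonneg ha hsp0) hsrpos.le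
    have hmu0 : 0 ≤ mu := div_nonneg (mul_nonneg hb hsq0) hsrpos.le
    have hlm : lam + mu = 1 := by
      rw [hlam, hmu, ← add_div, ← hsr, div_self hsrne]
    have h1 : ∀ i, lam * (p i * c i / sp) = a * (p i * c i) / sr := by
      intro i
      rcases eq_or_lt_of_le hsp0 with hz | hz
      · have hall : ∀ j ∈ Finset.univ, p j * c j = 0 :=
          (Finset.sum_eq_zero_iff_of_nonneg
            (fun j _ => mul_nonneg (hp j) (hc j))).1 hz.symm
        simp [hall i (Finset.mem_univ i)]
      · rw [hlam]; field_simp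
    have h2 : ∀ i, mu * (q i * c i / sq) = b * (q i * c i) / sr := by
      intro i
      rcases eq_or_lt_of_le hsq0 with hz | hz
      · have hall : ∀ j ∈ Finset.univ, q j * c j = 0 :=
          (Finset.sum_eq_zero_iff_of_nonneg
            (fun j _ => mul_nonneg (hq j) (hc j))).1 hz.symm
        simp [hall i (Finset.mem_univ i)]
      · rw [hmu]; field_simp
    have hcomb : (fun i => (a * p i + b * q i) * c i / sr)
        = lam • (fun i => p i * c i / sp) + mu • (fun i => q i * c i / sq) := by
      funext i
      simp only [Pi.add_apply, Pi.smul_apply, smul_eq_mul, h1 i, h2 i]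
      rw [← add_div]
      ring_nf
    have hVineq := hV.2 (Set.mem_univ (fun i => p i * c i / sp))
      (Set.mem_univ (fun i => q i * c i / sq)) hlam0 hmu0 hlm
    rw [← hcomb] at hVineq
    simp only [smul_eq_mul] at hVineq
    have key := mul_le_mul_of_nonneg_right hVineq hsrpos.le
    have elam : lam * sr = a * sp := div_mul_cancel₀ _ hsrne
    have emu : mu * sr = b * sq := div_mul_cancel₀ _ hsrne
    have e : ((lam * V (fun i => p i * c i / sp))
          + mu * V (fun i => q i * c i / sq)) * sr
        = a * (V (fun i => p i * c i / sp) * sp)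
          + b * (V (fun i => q i * c i / sq) * sq) := by
      linear_combination (V (fun i => p i * c i / sp)) * elam
        + (V (fun i => q i * c i / sq)) * emu
    rw [e] at key
    exact key


private lemma bayes_integrable (m : ℕ) (f : Fin (m + 1) → ℝ → ℝ)
    (hfm : ∀ i, Measurable (f i)) (hf : ∀ i x, 0 ≤ f i x)
    (hfi : ∀ i, Integrable (f i))
    (V : (Fin (m + 1) → ℝ) → ℝ) (hVc : Continuous V)
    (C : ℝ) (hC : ∀ x ∈ stdSimplex ℝ (Fin (m + 1)), ‖V x‖ ≤ C)
    (p : Fin (m + 1) → ℝ) (hp : ∀ i, 0 ≤ p i) :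
    Integrable (fun z : ℝ =>
      V (fun i => p i * f i z / ∑ j, p j * f j z) * ∑ j, p j * f j z) := by
  have hs_meas : Measurable fun z : ℝ => ∑ j, p j * f j z :=
    Finset.measurable_sum _ fun j _ => (hfm j).const_mul (p j)
  have hs_int : Integrable fun z : ℝ => ∑ j, p j * f j z :=
    integrable_finset_sum _ fun j _ => (hfi j).const_mul (p j)
  have hmeas : Measurable fun z : ℝ =>
      V (fun i => p i * f i z / ∑ j, p j * f j z) * ∑ j, p j * f j z := by
    refine Measurable.mul ?_ hs_meas
    exact hVc.measurable.comp
      (measurable_pi_lambda _ fun i => ((hfm i).const_mul (p i)).div hs_meas)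
  refine (hs_int.const_mul (max C 0)).mono' hmeas.aestronglyMeasurable
    (Filter.Eventually.of_forall fun z => ?_)
  have hs0 : 0 ≤ ∑ j, p j * f j z :=
    Finset.sum_nonneg fun j _ => mul_nonneg (hp j) (hf j z)
  rcases eq_or_lt_of_le hs0 with hz | hz
  · rw [Real.norm_eq_abs, ← hz, mul_zero, abs_zero, mul_zero]
  · have hmem : (fun i => p i * f i z / ∑ j, p j * f j z)
        ∈ stdSimplex ℝ (Fin (m + 1)) := by
      constructor
      · intro i
        exact div_nonneg (mul_nonneg (hp i) (hf i z)) hs0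
      · rw [← Finset.sum_div, div_self (ne_of_gt hz)]
    rw [Real.norm_eq_abs, abs_mul, abs_of_nonneg hs0]
    exact mul_le_mul_of_nonneg_right ((hC _ hmem).trans (le_max_left _ _)) hs0

/-- The Bayes operator preserves concavity: for a concave
`V : ℝ^{m+1} → ℝ` and nonnegative densities `f i`, the map
`p ↦ ∫ V(p'(z)) f_{Z,p}(z) dz`, where `f_{Z,p}(z) = ∑ i, p i * f i z` and
`p'_i(z) = p i * f i z / f_{Z,p}(z)`, is concave on the probability simplex. -/
theorem bayes_operator_preserves_concavity (m : ℕ)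
    (f : Fin (m + 1) → ℝ → ℝ)
    (hfm : ∀ i, Measurable (f i)) (hf : ∀ i x, 0 ≤ f i x)
    (hfi : ∀ i, Integrable (f i)) (hfint : ∀ i, (∫ z, f i z) = 1)
    (V : (Fin (m + 1) → ℝ) → ℝ) (hV : ConcaveOn ℝ Set.univ V) :
    ConcaveOn ℝ
      {p : Fin (m + 1) → ℝ | (∀ i, 0 ≤ p i) ∧ ∑ i, p i = 1}
      (fun p => ∫ z : ℝ,
        V (fun i => p i * f i z / ∑ j, p j * f j z) * ∑ j, p j * f j z) := by
  have hVc : Continuous V := by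
    rw [← continuousOn_univ]
    exact hV.continuousOn isOpen_univ
  obtain ⟨C, hC⟩ := (isCompact_stdSimplex ℝ (Fin (m + 1))).exists_bound_of_continuousOn
    hVc.continuousOn
  constructor
  · exact convex_stdSimplex ℝ (Fin (m + 1))
  · intro p hp q hq a b ha hb hab
    have hmemp := hp
    have hintp := bayes_integrable m f hfm hf hfi V hVc C hC p hp.1
    have hintq := bayes_integrable m f hfm hf hfi V hVc C hC q hq.1
    have hr : ∀ i, (a • p + b • q) i = a * p i + b * q i := fun i => rfl
    have hrpos : ∀ i, 0 ≤ (a • p + b • q) i := fun i =>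
      add_nonneg (mul_nonneg ha (hp.1 i)) (mul_nonneg hb (hq.1 i))
    have hintr := bayes_integrable m f hfm hf hfi V hVc C hC _ hrpos
    simp only [smul_eq_mul]
    rw [← integral_const_mul, ← integral_const_mul,
      ← integral_add (hintp.const_mul a) (hintq.const_mul b)]
    refine integral_mono ((hintp.const_mul a).add (hintq.const_mul b)) hintr fun z => ?_
    simp only [Pi.add_apply, Pi.smul_apply, smul_eq_mul]
    exact bayes_key V hV (fun i => f i z) p q (fun i => hf i z) hp.1 hq.1
      a b ha hb hab
end
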